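/- arXiv:2001.09484 — 2 statements merged into one kernel-verified Lean document; each statement's English description precedes it below -/
import Mathlib

section
/- With Ĥ = H^(d) ⊗ diag(1,-1) - H^(a) ⊗ (1/2)[[1,1],[-1,-1]], if H^(d) and H^(a) commute, then Ĥ² = ((H^(d))² - H^(d)H^(a)) ⊗ E, where E is the 2×2 identity matrix. -/
open Kronecker

theorem stmt_5 {n : ℕ} (Hd Ha : Matrix (Fin n) (Fin n) ℝ) (hHd : Hd.IsDiag)
    (hcomm : Hd * Ha = Ha * Hd) :
    (Hd ⊗ₖ (!![1, 0; 0, -1] : Matrix (Fin 2) (Fin 2) ℝ)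
      - Ha ⊗ₖ ((1 / 2 : ℝ) • !![1, 1; -1, -1])) ^ 2
    = (Hd ^ 2 - Hd * Ha) ⊗ₖ (1 : Matrix (Fin 2) (Fin 2) ℝ) := by
  have hsm : ((1 / 2 : ℝ) • !![1, 1; -1, -1] : Matrix (Fin 2) (Fin 2) ℝ)
      = !![1/2, 1/2; -(1/2), -(1/2)] := by
    ext i j; fin_cases i <;> fin_cases j <;> simp <;> norm_num
  rw [hsm, sq, sub_mul, mul_sub, mul_sub,
    ← Matrix.mul_kronecker_mul, ← Matrix.mul_kronecker_mul,
    ← Matrix.mul_kronecker_mul, ← Matrix.mul_kronecker_mul]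
  have h1 : (!![1, 0; 0, -1] * !![1, 0; 0, -1] : Matrix (Fin 2) (Fin 2) ℝ) = 1 := by
    ext i j; fin_cases i <;> fin_cases j <;> simp [Matrix.mul_apply, Fin.sum_univ_two,
      Matrix.one_apply]
  have h2 : (!![(1:ℝ)/2, 1/2; -(1/2), -(1/2)] * !![1/2, 1/2; -(1/2), -(1/2)]) = 0 := by
    ext i j; fin_cases i <;> fin_cases j <;> simp [Matrix.mul_apply, Fin.sum_univ_two] <;> ring
  have h3 : (!![(1:ℝ), 0; 0, -1] * !![1/2, 1/2; -(1/2), -(1/2)])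
      + (!![(1:ℝ)/2, 1/2; -(1/2), -(1/2)] * !![1, 0; 0, -1]) = 1 := by
    ext i j; fin_cases i <;> fin_cases j <;>
      simp [Matrix.mul_apply, Fin.sum_univ_two, Matrix.one_apply] <;> ring
  rw [h1, h2, Matrix.kronecker_zero, sub_zero, hcomm]
  rw [sub_sub, ← Matrix.kronecker_add]
  rw [h3, ← sq]
  ext i j
  simp [Matrix.kroneckerMap_apply, Matrix.sub_apply, sub_mul]
end

section
/- Let Ĥ = H^(d) ⊗ diag(1,-1) - H^(a) ⊗ (1/2)[[1,1],[-1,-1]] with H^(d) diagonal. If x̂(t) ∈ ℂ^{2n} satisfies i·dx̂/dt = Ĥ x̂ and x⁺(t), x⁻(t) ∈ ℂⁿ are the vectors of odd- and even-indexed components of x̂(t) respectively, then x(t) := x⁺(t) + x⁻(t) satisfies d²x/dt² = -((H^(d))² - H^(d)H^(a)) x(t). -/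
open Kronecker

noncomputable def sumMap (n : ℕ) : ((Fin n × Fin 2) → ℂ) →L[ℝ] (Fin n → ℂ) :=
  LinearMap.toContinuousLinearMap
  { toFun := fun v i => v (i, 0) + v (i, 1)
    map_add' := fun u v => by funext i; simp; ring
    map_smul' := fun c v => by funext i; simp [smul_add] }

noncomputable def evoMap {n : ℕ} (Hhat : Matrix (Fin n × Fin 2) (Fin n × Fin 2) ℂ) :
    ((Fin n × Fin 2) → ℂ) →L[ℝ] ((Fin n × Fin 2) → ℂ) :=
  LinearMap.toContinuousLinearMap
    ((((-Complex.I) • Hhat.mulVecLin : _ →ₗ[ℂ] _)).restrictScalars ℝ)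

lemma evoMap_apply {n : ℕ} (Hhat : Matrix (Fin n × Fin 2) (Fin n × Fin 2) ℂ)
    (v : (Fin n × Fin 2) → ℂ) : evoMap Hhat v = (-Complex.I) • Hhat.mulVec v := rfl

lemma sumMap_apply {n : ℕ} (v : (Fin n × Fin 2) → ℂ) (i : Fin n) :
    sumMap n v i = v (i, 0) + v (i, 1) := rfl

lemma key {n : ℕ} (Hd Ha : Matrix (Fin n) (Fin n) ℂ) (v : (Fin n × Fin 2) → ℂ) (i : Fin n) :
    (((Hd*Hd) ⊗ₖ (1 : Matrix (Fin 2) (Fin 2) ℂ)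
      - (Hd*Ha) ⊗ₖ ((1/2 : ℂ) • !![1,1;1,1])
      - (Ha*Hd) ⊗ₖ ((1/2 : ℂ) • !![1,-1;-1,1])).mulVec v) (i,0)
    + (((Hd*Hd) ⊗ₖ (1 : Matrix (Fin 2) (Fin 2) ℂ)
      - (Hd*Ha) ⊗ₖ ((1/2 : ℂ) • !![1,1;1,1])
      - (Ha*Hd) ⊗ₖ ((1/2 : ℂ) • !![1,-1;-1,1])).mulVec v) (i,1)
    = ((Hd^2 - Hd*Ha).mulVec (fun j => v (j,0) + v (j,1))) i := by
  simp only [Matrix.mulVec, dotProduct, Fintype.sum_prod_type, Fin.sum_univ_two,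
    Matrix.kroneckerMap_apply, Matrix.sub_apply, Matrix.smul_apply, Matrix.one_apply,
    pow_two, smul_eq_mul, Matrix.cons_val', Matrix.cons_val_zero, Matrix.cons_val_one,
    Matrix.head_cons, Matrix.head_fin_const, Matrix.empty_val', Matrix.cons_val_fin_one,
    Matrix.of_apply]
  rw [← Finset.sum_add_distrib]
  refine Finset.sum_congr rfl fun j _ => ?_
  norm_num
  ring

theorem stmt_15 {n : ℕ} (Hd Ha : Matrix (Fin n) (Fin n) ℂ) (hHd : Hd.IsDiag)
    (Hhat : Matrix (Fin n × Fin 2) (Fin n × Fin 2) ℂ)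
    (hHhat : Hhat = Hd ⊗ₖ (!![1, 0; 0, -1] : Matrix (Fin 2) (Fin 2) ℂ)
      - Ha ⊗ₖ ((1 / 2 : ℂ) • !![1, 1; -1, -1]))
    (xhat : ℝ → (Fin n × Fin 2) → ℂ) (hdiff : Differentiable ℝ xhat)
    (heq : ∀ t, Complex.I • deriv xhat t = Hhat.mulVec (xhat t)) :
    ∀ t, deriv (deriv fun s => fun i : Fin n => xhat s (i, 0) + xhat s (i, 1)) t
      = -((Hd ^ 2 - Hd * Ha).mulVec fun i : Fin n =>
          xhat t (i, 0) + xhat t (i, 1)) := by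
  intro t
  set F := evoMap Hhat with hF
  have hderiv : ∀ s, deriv xhat s = F (xhat s) := by
    intro s
    have h2 : deriv xhat s = (-Complex.I) • (Complex.I • deriv xhat s) := by
      rw [smul_smul]; simp
    rw [h2, heq s, hF, evoMap_apply]
  have hx : ∀ s, HasDerivAt xhat (F (xhat s)) s := fun s => hderiv s ▸ (hdiff s).hasDerivAt
  have h1 : (deriv fun s => fun i : Fin n => xhat s (i, 0) + xhat s (i, 1))
      = fun s => sumMap n (F (xhat s)) := by
    funext s
    exact ((sumMap n).hasFDerivAt.comp_hasDerivAt s (hx s)).deriv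
  rw [h1]
  have h2 : deriv (fun s => sumMap n (F (xhat s))) t = sumMap n (F (F (xhat t))) :=
    (((sumMap n).comp F).hasFDerivAt.comp_hasDerivAt t (hx t)).deriv
  rw [h2]
  have hFF : F (F (xhat t)) = -((Hhat * Hhat).mulVec (xhat t)) := by
    rw [hF, evoMap_apply, evoMap_apply, Matrix.mulVec_smul, smul_smul,
      Matrix.mulVec_mulVec]
    simp [Complex.I_mul_I]
  have hsq : Hhat * Hhat = (Hd*Hd) ⊗ₖ (1 : Matrix (Fin 2) (Fin 2) ℂ)
      - (Hd*Ha) ⊗ₖ ((1/2 : ℂ) • !![1,1;1,1])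
      - (Ha*Hd) ⊗ₖ ((1/2 : ℂ) • !![1,-1;-1,1]) := by
    subst hHhat
    rw [sub_mul, mul_sub, mul_sub, ← Matrix.mul_kronecker_mul, ← Matrix.mul_kronecker_mul,
        ← Matrix.mul_kronecker_mul, ← Matrix.mul_kronecker_mul]
    have e1 : (!![1,0;0,-1] * !![1,0;0,-1] : Matrix (Fin 2) (Fin 2) ℂ) = 1 := by
      ext i j; fin_cases i <;> fin_cases j <;>
        simp [Matrix.mul_apply, Fin.sum_univ_two, Matrix.one_apply]
    have e2 : (!![1,0;0,-1] * ((1/2 : ℂ) • !![1,1;-1,-1]) : Matrix (Fin 2) (Fin 2) ℂ)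
        = (1/2 : ℂ) • !![1,1;1,1] := by
      ext i j; fin_cases i <;> fin_cases j <;>
        norm_num [Matrix.mul_apply, Fin.sum_univ_two]
    have e3 : (((1/2 : ℂ) • !![1,1;-1,-1]) * !![1,0;0,-1] : Matrix (Fin 2) (Fin 2) ℂ)
        = (1/2 : ℂ) • !![1,-1;-1,1] := by
      ext i j; fin_cases i <;> fin_cases j <;>
        norm_num [Matrix.mul_apply, Fin.sum_univ_two]
    have e4 : (((1/2 : ℂ) • !![1,1;-1,-1]) * ((1/2 : ℂ) • !![1,1;-1,-1])
        : Matrix (Fin 2) (Fin 2) ℂ) = 0 := by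
      ext i j; fin_cases i <;> fin_cases j <;>
        norm_num [Matrix.mul_apply, Fin.sum_univ_two]
    rw [e1, e2, e3, e4, Matrix.kronecker_zero, sub_zero]
  rw [hFF, hsq]
  funext i
  rw [sumMap_apply]
  simp only [Pi.neg_apply]
  rw [← neg_add]
  exact congrArg Neg.neg (key Hd Ha (xhat t) i)
end
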